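/- Let Φ : (S,·) → (T,·) be a semigroup homomorphism such that Φ(S) is a J-set in T. If A ⊆ S is a J-set in S, then Φ(A) is a J-set in T. -/

import Mathlib

/-- Left fold of multiplication: `mulList x [y₁,…,yₙ] = x * y₁ * ⋯ * yₙ` (product taken
in order; no identity element needed). -/
def mulList {T : Type*} [Mul T] : T → List T → T
  | x, [] => x
  | x, y :: l => mulList (x * y) l

/-- For `m ≥ 1` (here the paper's `m` is `m + 1`), `a ∈ T^{m+2}` (the paper's
`a ∈ T^{(m+1)+1}`), a strictly increasing `t ∈ ℕ^{m+1}` and `f : ℕ → T`, this is the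
ordered product `x(m,a,t,f) = (∏_{j=1}^{m+1} a(j)·f(t(j))) · a(m+2)`. -/
def xProd {T : Type*} [Mul T] (m : ℕ) (a : Fin (m + 2) → T) (t : Fin (m + 1) → ℕ)
    (f : ℕ → T) : T :=
  mulList (a 0 * f (t 0))
    ((List.ofFn fun j : Fin m => a j.succ.castSucc * f (t j.succ)) ++ [a (Fin.last (m + 1))])

/-- A subset `A` of a semigroup `T` is a *J-set* if for every finite nonempty set `F` of
sequences `f : ℕ → T` there exist `m`, `a ∈ T^{m+1}` and strictly increasing
`t(1) < ⋯ < t(m)` in `ℕ` such that `x(m,a,t,f) ∈ A` for every `f ∈ F`. -/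
def MulJSet {T : Type*} [Mul T] (A : Set T) : Prop :=
  ∀ F : Finset (ℕ → T), F.Nonempty →
    ∃ (m : ℕ) (a : Fin (m + 2) → T) (t : Fin (m + 1) → ℕ),
      StrictMono t ∧ ∀ f ∈ F, xProd m a t f ∈ A

/-! ### Auxiliary machinery: products over "patterns" given by lists -/

/-- Product `a₁ f(n₁) a₂ f(n₂) ⋯ aₖ f(nₖ) c` determined by a list of pairs and a
trailing coefficient. -/
def patProd {T : Type*} [Mul T] (f : ℕ → T) : List (T × ℕ) → T → T
  | [], c => c
  | (a, n) :: l, c => a * f n * patProd f l c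

theorem patProd_append {T : Type*} [Mul T] (f : ℕ → T) :
    ∀ (l₁ l₂ : List (T × ℕ)) (c : T),
      patProd f (l₁ ++ l₂) c = patProd f l₁ (patProd f l₂ c)
  | [], l₂, c => rfl
  | (a, n) :: l₁, l₂, c =>
    congrArg (fun z => a * f n * z) (patProd_append f l₁ l₂ c)

theorem patProd_mul_right {T : Type*} [Semigroup T] (f : ℕ → T) :
    ∀ (l : List (T × ℕ)) (c y : T), patProd f l (c * y) = patProd f l c * y
  | [], c, y => rfl
  | (a, n) :: l, c, y => by
    simp only [patProd, patProd_mul_right f l c y, mul_assoc]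

theorem patProd_shift {T : Type*} [Mul T] (f : ℕ → T) (N : ℕ) :
    ∀ (l : List (T × ℕ)) (c : T),
      patProd (fun k => f (k + N)) l c = patProd f (l.map fun p => (p.1, p.2 + N)) c
  | [], c => rfl
  | (a, n) :: l, c => by
    simp only [patProd, List.map_cons, patProd_shift f N l c]

theorem mulList_core {T : Type*} [Semigroup T] (f : ℕ → T) :
    ∀ (l : List (T × ℕ)) (x c : T),
      mulList x (l.map (fun p => p.1 * f p.2) ++ [c]) = x * patProd f l c
  | [], x, c => rfl
  | (a, n) :: l, x, c => by
    show mulList (x * (a * f n)) ((l.map fun p => p.1 * f p.2) ++ [c]) =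
      x * patProd f ((a, n) :: l) c
    rw [mulList_core f l (x * (a * f n)) c]
    show x * (a * f n) * patProd f l c = x * (a * f n * patProd f l c)
    rw [mul_assoc]

theorem xProd_eq_patProd {T : Type*} [Semigroup T] (m : ℕ) (a : Fin (m + 2) → T)
    (t : Fin (m + 1) → ℕ) (f : ℕ → T) :
    xProd m a t f =
      patProd f (List.ofFn fun j : Fin (m + 1) => (a j.castSucc, t j))
        (a (Fin.last (m + 1))) := by
  rw [List.ofFn_succ]
  have : (List.ofFn fun j : Fin m => a j.succ.castSucc * f (t j.succ)) =
      (List.ofFn fun j : Fin m => (a j.succ.castSucc, t j.succ)).map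
        (fun p => p.1 * f p.2) := by
    rw [List.map_ofFn]; rfl
  simp only [xProd, this, mulList_core, patProd, Fin.castSucc_zero]

/-- `mulHead x l` multiplies `x` onto the coefficient of the head of `l`. -/
def mulHead {T : Type*} [Mul T] (x : T) : List (T × ℕ) → List (T × ℕ)
  | [] => []
  | (a, k) :: l => (x * a, k) :: l

/-- `consume x q` multiplies `x` onto the head of `q.1` if possible, else onto `q.2`. -/
def consume {T : Type*} [Mul T] (x : T) : List (T × ℕ) × T → List (T × ℕ) × T
  | ([], c) => ([], x * c)
  | ((a, k) :: l, c) => ((x * a, k) :: l, c)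

theorem patProd_mulHead {T : Type*} [Semigroup T] (f : ℕ → T) (x : T) :
    ∀ (l : List (T × ℕ)), l ≠ [] → ∀ c, patProd f (mulHead x l) c = x * patProd f l c
  | [], h => absurd rfl h
  | (a, k) :: l, _ => fun c => by simp only [mulHead, patProd, mul_assoc]

theorem patProd_consume {T : Type*} [Semigroup T] (f : ℕ → T) (x : T) :
    ∀ q : List (T × ℕ) × T,
      patProd f (consume x q).1 (consume x q).2 = x * patProd f q.1 q.2
  | ([], c) => rfl
  | ((a, k) :: l, c) => by simp only [consume, patProd, mul_assoc]

theorem mulHead_map_snd {T : Type*} [Mul T] (x : T) :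
    ∀ l : List (T × ℕ), (mulHead x l).map Prod.snd = l.map Prod.snd
  | [] => rfl
  | (a, k) :: l => rfl

theorem consume_fst_map_snd {T : Type*} [Mul T] (x : T) :
    ∀ q : List (T × ℕ) × T, (consume x q).1.map Prod.snd = q.1.map Prod.snd
  | ([], c) => rfl
  | ((a, k) :: l, c) => rfl

/-- Glue together the blocks `L n` (with trailing coefficients `C n`) along an outer
pattern `r` in `S` with trailing element `e`. -/
def build {S T : Type*} [Mul T] (Φ : S → T) (L : ℕ → List (T × ℕ)) (C : ℕ → T) :
    List (S × ℕ) → S → List (T × ℕ) × T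
  | [], e => ([], Φ e)
  | (d, n) :: r, e =>
    let q := consume (C n) (build Φ L C r e)
    (mulHead (Φ d) (L n) ++ q.1, q.2)

theorem build_correct {S T : Type*} [Semigroup S] [Semigroup T] (Φ : S → T)
    (hΦ : ∀ x y : S, Φ (x * y) = Φ x * Φ y) (L : ℕ → List (T × ℕ)) (C : ℕ → T)
    (hL : ∀ n, L n ≠ []) (f : ℕ → T) (g : ℕ → S)
    (hg : ∀ n, Φ (g n) = patProd f (L n) (C n)) :
    ∀ (r : List (S × ℕ)) (e : S),
      patProd f (build Φ L C r e).1 (build Φ L C r e).2 = Φ (patProd g r e)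
  | [], e => rfl
  | (d, n) :: r, e => by
    have IH := build_correct Φ hΦ L C hL f g hg r e
    show patProd f (mulHead (Φ d) (L n) ++ (consume (C n) (build Φ L C r e)).1)
        (consume (C n) (build Φ L C r e)).2 = _
    rw [patProd_append, patProd_consume, IH, patProd_mulHead f _ _ (hL n),
      patProd_mul_right, ← hg n, ← hΦ, ← hΦ, ← mul_assoc]
    rfl

theorem build_times {S T : Type*} [Mul T] (Φ : S → T) (L : ℕ → List (T × ℕ))
    (C : ℕ → T) :
    ∀ (r : List (S × ℕ)) (e : S),
      (build Φ L C r e).1.map Prod.snd =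
        (r.map fun q => (L q.2).map Prod.snd).flatten
  | [], e => rfl
  | (d, n) :: r, e => by
    show (mulHead (Φ d) (L n) ++ (consume (C n) (build Φ L C r e)).1).map Prod.snd = _
    rw [List.map_append, mulHead_map_snd, consume_fst_map_snd,
      build_times Φ L C r e, List.map_cons, List.flatten_cons]

theorem le_foldr_max : ∀ (l : List ℕ) (k : ℕ), k ∈ l → k ≤ l.foldr max 0
  | [], k, h => absurd h List.not_mem_nil
  | a :: l, k, h => by
    rcases List.mem_cons.mp h with h | h
    · exact h ▸ le_max_left _ _
    · exact le_trans (le_foldr_max l k h) (le_max_right _ _)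

/-- Convert a list pattern with strictly increasing times into an `xProd` witness. -/
theorem toWitness {T : Type*} [Semigroup T] (l : List (T × ℕ)) (c : T) (hne : l ≠ [])
    (hch : (l.map Prod.snd).Chain' (· < ·)) :
    ∃ (m : ℕ) (a : Fin (m + 2) → T) (t : Fin (m + 1) → ℕ),
      StrictMono t ∧ ∀ f : ℕ → T, xProd m a t f = patProd f l c := by
  obtain ⟨hd, tl, rfl⟩ := List.exists_cons_of_ne_nil hne
  set l : List (T × ℕ) := hd :: tl with hl
  have hlen : l.length = tl.length + 1 := rfl
  refine ⟨tl.length,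
    fun i => if h : (i : ℕ) < tl.length + 1 then (l[(i : ℕ)]'h).1 else c,
    fun i => (l[(i : ℕ)]'(i.isLt)).2, ?_, ?_⟩
  · have hp := List.isChain_iff_pairwise.mp hch
    rw [List.pairwise_iff_getElem] at hp
    intro i j hij
    have := hp (i : ℕ) (j : ℕ) (by simpa [hlen] using i.isLt)
      (by simpa [hlen] using j.isLt) hij
    simpa using this
  · intro f
    rw [xProd_eq_patProd]
    congr 1
    · apply List.ext_getElem
      · simp [hlen]
      · intro k h1 h2
        have hk : k < tl.length + 1 := by simpa using h1
        rw [List.getElem_ofFn, dif_pos]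
        exact rfl
    · rw [dif_neg]
      simp [Fin.last]

/-- If `Φ : S → T` is a semigroup homomorphism such that `Φ(S)` is a J-set in `T`, and
`A ⊆ S` is a J-set in `S`, then `Φ(A)` is a J-set in `T`. -/
theorem mulJSet_image_of_mulJSet {S T : Type*} [Semigroup S] [Semigroup T] (Φ : S → T)
    (hΦ : ∀ x y : S, Φ (x * y) = Φ x * Φ y)
    (hrange : MulJSet (Set.range Φ))
    (A : Set S) (hA : MulJSet A) : MulJSet (Φ '' A) := by
  classical
  intro F hF
  -- Step 1: for each bound N, find a block pattern with all times > N whose products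
  -- lie in the range of Φ for every f ∈ F.
  have key : ∀ N : ℕ, ∃ lc : List (T × ℕ) × T, lc.1 ≠ [] ∧
      (lc.1.map Prod.snd).Chain' (· < ·) ∧ (∀ k ∈ lc.1.map Prod.snd, N < k) ∧
      ∀ f ∈ F, patProd f lc.1 lc.2 ∈ Set.range Φ := by
    intro N
    obtain ⟨m, a, t, ht, hx⟩ := hrange (F.image fun f => fun k => f (k + (N + 1)))
      (hF.image _)
    refine ⟨⟨(List.ofFn fun j : Fin (m + 1) => (a j.castSucc, t j)).map
      (fun p => (p.1, p.2 + (N + 1))), a (Fin.last (m + 1))⟩, ?_, ?_, ?_, ?_⟩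
    · simp
    · rw [List.map_map, List.map_ofFn]
      rw [List.Chain', List.isChain_iff_pairwise]
      rw [show ((Prod.snd ∘ fun p : T × ℕ => (p.1, p.2 + (N + 1))) ∘
          fun j : Fin (m + 1) => (a j.castSucc, t j)) = fun j => t j + (N + 1) from rfl]
      exact List.pairwise_ofFn.mpr fun i j hij => by
        have := ht hij; omega
    · intro k hk
      rw [List.map_map, List.map_ofFn] at hk
      obtain ⟨j, hj⟩ := List.mem_ofFn.mp hk
      have : t j + (N + 1) = k := hj
      omega
    · intro f hf
      have := hx _ (Finset.mem_image_of_mem (fun f => fun k => f (k + (N + 1))) hf)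
      rw [xProd_eq_patProd, patProd_shift] at this
      exact this
  choose blk hbne hbch hbgt hbmem using key
  -- the bound sequence
  let bnd : ℕ → ℕ := fun n =>
    Nat.rec 0 (fun _ p => max p (((blk p).1.map Prod.snd).foldr max 0)) n
  have hbnd_succ : ∀ n, bnd (n + 1) =
      max (bnd n) (((blk (bnd n)).1.map Prod.snd).foldr max 0) := fun n => rfl
  have hbnd_mono : Monotone bnd :=
    monotone_nat_of_le_succ fun n => by rw [hbnd_succ]; exact le_max_left _ _
  set L : ℕ → List (T × ℕ) := fun n => (blk (bnd n)).1 with hL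
  set C : ℕ → T := fun n => (blk (bnd n)).2 with hC
  have hLne : ∀ n, L n ≠ [] := fun n => hbne (bnd n)
  have hub : ∀ n, ∀ k ∈ (L n).map Prod.snd, k ≤ bnd (n + 1) := by
    intro n k hk
    rw [hbnd_succ]
    exact le_trans (le_foldr_max _ _ hk) (le_max_right _ _)
  have hlb : ∀ n, ∀ k ∈ (L n).map Prod.snd, bnd n < k := fun n => hbgt (bnd n)
  -- Step 2: lift the block products to S
  have hrblk : ∀ f ∈ F, ∀ n, patProd f (L n) (C n) ∈ Set.range Φ :=
    fun f hf n => hbmem (bnd n) f hf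
  obtain ⟨f0, hf0⟩ := hF
  obtain ⟨s0, -⟩ := hrblk f0 hf0 0
  set g : (ℕ → T) → ℕ → S := fun f n =>
    if h : patProd f (L n) (C n) ∈ Set.range Φ then h.choose else s0 with hgdef
  have hg : ∀ f ∈ F, ∀ n, Φ (g f n) = patProd f (L n) (C n) := by
    intro f hf n
    have h := hrblk f hf n
    simp only [hgdef, dif_pos h]
    exact h.choose_spec
  -- Step 3: apply the J-set property of A in S
  obtain ⟨p, cS, sT, hs, hxA⟩ := hA (F.image g) ⟨g f0, Finset.mem_image_of_mem g hf0⟩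
  set r : List (S × ℕ) := List.ofFn fun j : Fin (p + 1) => (cS j.castSucc, sT j) with hr
  set e : S := cS (Fin.last (p + 1)) with he
  -- the built pattern
  have hbuilt_times : (build Φ L C r e).1.map Prod.snd =
      (r.map fun q => (L q.2).map Prod.snd).flatten := build_times Φ L C r e
  have hbuiltne : (build Φ L C r e).1 ≠ [] := by
    intro h
    have : ((build Φ L C r e).1.map Prod.snd) = [] := by rw [h]; rfl
    rw [hbuilt_times, hr] at this
    rw [List.ofFn_succ] at this
    simp only [List.map_cons, List.flatten_cons, List.append_eq_nil_iff] at this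
    exact (hLne _) (List.map_eq_nil_iff.mp this.1)
  have hbuiltch : ((build Φ L C r e).1.map Prod.snd).Chain' (· < ·) := by
    rw [List.Chain', List.isChain_iff_pairwise, hbuilt_times]
    rw [List.pairwise_flatten]
    constructor
    · intro l' hl'
      rw [List.mem_map] at hl'
      obtain ⟨q, -, rfl⟩ := hl'
      exact List.isChain_iff_pairwise.mp (hbch (bnd q.2))
    · rw [hr, List.map_ofFn]
      refine List.pairwise_ofFn.mpr fun i j hij => ?_
      intro x hx y hy
      have hxle : x ≤ bnd (sT i + 1) := hub (sT i) x hx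
      have hylt : bnd (sT j) < y := hlb (sT j) y hy
      have hsij : sT i < sT j := hs hij
      calc x ≤ bnd (sT i + 1) := hxle
        _ ≤ bnd (sT j) := hbnd_mono hsij
        _ < y := hylt
  obtain ⟨m, a, t, ht, heq⟩ := toWitness (build Φ L C r e).1 (build Φ L C r e).2
    hbuiltne hbuiltch
  refine ⟨m, a, t, ht, fun f hf => ?_⟩
  rw [heq]
  rw [build_correct Φ hΦ L C hLne f (g f) (hg f hf) r e]
  have hmem : xProd p cS sT (g f) ∈ A := hxA (g f) (Finset.mem_image_of_mem g hf)
  rw [xProd_eq_patProd] at hmem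
  exact ⟨_, hmem, rfl⟩
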